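/- Define g : [0, π) → [0, π) by g(z) = arccos( ((π − z) cos z + sin z)/π ), let g^l be the l-fold iterate of g (g^0 = identity), and for an integer L ≥ 0 define F_L(θ) = (1/(L+1)) Σ_{l=0}^{L} [ cos(g^l(θ)) · Π_{l'=l}^{L−1} (1 − g^{l'}(θ)/π) ] (empty product equal to 1). Let x_1, x_2 ∈ ℝ^d be nonzero, set a = ‖x_1‖², b = ‖x_2‖², and for θ ∈ (0, π) let G(θ) be the 2×2 symmetric matrix with diagonal a, b and off-diagonal √(ab)·cos θ, and let K_L(θ) be the 2×2 symmetric matrix with diagonal a, b and off-diagonal √(ab)·F_L(θ). Then for all integers L_1 > L_2 ≥ 1 there exists δ > 0 such that for every θ ∈ (0, δ): the matrices G(θ), K_{L_2}(θ), K_{L_1}(θ) are positive definite, and their condition numbers satisfy κ(K_{L_1}(θ)) < κ(K_{L_2}(θ)) < κ(G(θ)). Moreover, for each L ≥ 1 and θ ∈ (0, δ), the eigenvalues interlace as λ_max(G(θ)) > λ_max(K_L(θ)) ≥ λ_min(K_L(θ)) > λ_min(G(θ)). -/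

import Mathlib

/-- The layer-to-layer embedding-angle map of an infinitely wide ReLU network:
`g z = arccos(((π − z) cos z + sin z)/π)`. -/
noncomputable def g (z : ℝ) : ℝ :=
  Real.arccos (((Real.pi - z) * Real.cos z + Real.sin z) / Real.pi)



lemma arccos_anti {x y : ℝ} (h : x ≤ y) : Real.arccos y ≤ Real.arccos x := by
  simp only [Real.arccos_eq_pi_div_two_sub_arcsin]
  linarith [Real.monotone_arcsin h]

lemma sin_ge_mul_cos {z : ℝ} (h0 : 0 < z) (h1 : z ≤ 1/2) : z * Real.cos z ≤ Real.sin z := by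
  have hz2 : z^2 ≤ z/2 := by nlinarith
  have hz3 : z^3 ≤ z/4 := by nlinarith
  have hs2 : Real.sin (z/2) ^ 2 = 1/2 - Real.cos z / 2 := by
    have := Real.sin_sq_eq_half_sub (z/2); rw [this]; ring_nf
  have h2 : z/2 - (z/2)^3/4 < Real.sin (z/2) := by nlinarith [Real.sin_gt_sub_cube (x := z/2) (by linarith), pow_pos (half_pos h0) 3]
  have h3 : z - z^3/4 < Real.sin z := by nlinarith [Real.sin_gt_sub_cube h0, pow_pos h0 3]
  have e1 : z/2 - z/128 ≤ z/2 - (z/2)^3/4 := by nlinarith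
  have hm0 : (0:ℝ) < z/2 - z/128 := by linarith
  have hms : z/2 - z/128 ≤ Real.sin (z/2) := by linarith
  have e2 : (z/2 - z/128)*(z/2 - z/128) ≤ Real.sin (z/2) * Real.sin (z/2) :=
    mul_le_mul hms hms hm0.le (by linarith)
  have e3 : z^2/8 ≤ Real.sin (z/2) * Real.sin (z/2) := by nlinarith [sq_nonneg z]
  have e4 : z*(z^2/8) ≤ z*(Real.sin (z/2) * Real.sin (z/2)) :=
    mul_le_mul_of_nonneg_left e3 h0.le
  have hcos : Real.cos z = 1 - 2*(Real.sin (z/2) * Real.sin (z/2)) := by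
    have : Real.sin (z/2) * Real.sin (z/2) = Real.sin (z/2)^2 := by ring
    rw [this, hs2]; ring
  rw [hcos]; nlinarith [e4, h3]

lemma g_le {z : ℝ} (h0 : 0 < z) (h1 : z ≤ 1/2) : g z ≤ z := by
  have hpi := Real.pi_pos
  have h2 : Real.cos z ≤ ((Real.pi - z) * Real.cos z + Real.sin z) / Real.pi := by
    rw [le_div_iff₀ hpi]
    nlinarith [sin_ge_mul_cos h0 h1]
  calc g z ≤ Real.arccos (Real.cos z) := arccos_anti h2
    _ = z := Real.arccos_cos h0.le (by linarith [Real.pi_gt_three])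

lemma g_ge {z : ℝ} (h0 : 0 < z) (h1 : z ≤ 1/2) : z - z^2 ≤ g z := by
  have hpi := Real.pi_pos
  have hpi3 := Real.pi_gt_three
  have hz2 : z^2 ≤ z/2 := by nlinarith
  have hz2' : z^2 ≤ 1/4 := by nlinarith
  have hz3 : z^3 ≤ z/4 := by nlinarith
  set S1 := Real.sin (z - z^2/2) with hS1
  set S2 := Real.sin (z^2/2) with hS2
  have key : ((Real.pi - z) * Real.cos z + Real.sin z) / Real.pi ≤ Real.cos (z - z^2) := by
    rw [div_le_iff₀ hpi]
    have hcc : Real.cos (z - z^2) - Real.cos z = 2 * S1 * S2 := by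
      rw [Real.cos_sub_cos, show (z - z^2 + z)/2 = z - z^2/2 by ring,
        show (z - z^2 - z)/2 = -(z^2/2) by ring, Real.sin_neg]
      ring
    have hw0 : (0:ℝ) < z - z^2/2 := by linarith
    have hwle : z - z^2/2 ≤ z := by nlinarith [sq_nonneg z]
    have hw3 : (z - z^2/2)^3 ≤ z^3 := pow_le_pow_left₀ hw0.le hwle 3
    have hb1 : z - z^2/2 - (z - z^2/2)^3/4 < S1 :=
      by have := Real.sin_gt_sub_cube hw0; rw [← hS1] at this; nlinarith [pow_pos hw0 3]
    have hb2 : z^2/2 - (z^2/2)^3/4 < S2 :=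
      by have := Real.sin_gt_sub_cube (x := z^2/2) (by positivity); rw [← hS2] at this; nlinarith [pow_pos (by positivity : (0:ℝ) < z^2/2) 3]
    have hs1 : 2*z/3 ≤ S1 := by nlinarith
    have h6 : (z^2/2)^3/4 ≤ z^2/512 := by nlinarith [sq_nonneg (z^2), mul_le_mul_of_nonneg_left hz2' (sq_nonneg z)]
    have hs2 : z^2/3 ≤ S2 := by nlinarith
    have hprod : 2*z^3/9 ≤ S1*S2 := by nlinarith [mul_le_mul hs1 hs2 (by positivity) (by linarith)]
    have hpiS : 3*(2*z^3/9) ≤ Real.pi*(S1*S2) :=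
      mul_le_mul hpi3.le hprod (by positivity) hpi.le
    have hsz : Real.sin z < z := Real.sin_lt h0
    have hcz : 1 - z^2/2 ≤ Real.cos z := Real.one_sub_sq_div_two_le_cos
    have hzcz : z*(1 - z^2/2) ≤ z*Real.cos z := mul_le_mul_of_nonneg_left hcz h0.le
    have hgoal : Real.cos (z - z^2)*Real.pi = Real.cos z*Real.pi + 2*S1*S2*Real.pi := by
      linear_combination Real.pi * hcc
    rw [hgoal]
    nlinarith [hsz, hzcz, hpiS]
  have harg : z - z^2 ≤ Real.pi := by nlinarith
  calc z - z^2 = Real.arccos (Real.cos (z - z^2)) :=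
        (Real.arccos_cos (by nlinarith) harg).symm
    _ ≤ g z := arccos_anti key

lemma iter_bounds {θ : ℝ} (h0 : 0 < θ) (h1 : θ ≤ 1/2) (l : ℕ) :
    θ * (1-θ)^l ≤ g^[l] θ ∧ g^[l] θ ≤ θ := by
  induction l with
  | zero => simp
  | succ l ih =>
    obtain ⟨hlo, hhi⟩ := ih
    have hpow : (0:ℝ) < (1-θ)^l := pow_pos (by linarith) l
    have hw0 : 0 < g^[l] θ := lt_of_lt_of_le (by positivity) hlo
    have hw1 : g^[l] θ ≤ 1/2 := le_trans hhi h1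
    rw [Function.iterate_succ_apply']
    constructor
    · have := g_ge hw0 hw1
      have h2 : g^[l] θ * (1 - g^[l] θ) ≤ g (g^[l] θ) := by nlinarith
      have h3 : θ * (1-θ)^l * (1-θ) ≤ g^[l] θ * (1 - g^[l] θ) := by nlinarith
      calc θ * (1-θ)^(l+1) = θ * (1-θ)^l * (1-θ) := by ring
        _ ≤ g (g^[l] θ) := le_trans h3 h2
    · exact le_trans (g_le hw0 hw1) hhi





/-- The cosine of the model-gradient angle of an infinitely wide depth-`L` ReLU network
(Theorem 4.3 of the paper):
`F L θ = (1/(L+1)) ∑_{l=0}^{L} cos (g^[l] θ) ∏_{l'=l}^{L−1} (1 − g^[l'] θ / π)`,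
with the empty product equal to `1`. -/
noncomputable def F (L : ℕ) (θ : ℝ) : ℝ :=
  (1 / ((L : ℝ) + 1)) * ∑ l ∈ Finset.range (L + 1),
    Real.cos (g^[l] θ) * ∏ l' ∈ Finset.Ico l L, (1 - g^[l'] θ / Real.pi)

lemma pow_le_quad {v : ℝ} (h0 : 0 ≤ v) (h1 : v ≤ 1) (k : ℕ) :
    (1-v)^k ≤ 1 - k*v + k^2*v^2/2 := by
  induction k with
  | zero => simp
  | succ k ih =>
    have h2 : (0:ℝ) ≤ 1 - v := by linarith
    calc (1-v)^(k+1) = (1-v)^k * (1-v) := by ring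
      _ ≤ (1 - k*v + k^2*v^2/2) * (1-v) := mul_le_mul_of_nonneg_right ih h2
      _ ≤ 1 - (k+1:ℕ)*v + ((k+1:ℕ):ℝ)^2*v^2/2 := by
          push_cast
          nlinarith [sq_nonneg v, mul_nonneg (mul_nonneg (sq_nonneg ((k:ℝ))) h0) (sq_nonneg v),
            mul_nonneg (sq_nonneg ((k:ℝ))) (mul_nonneg (mul_nonneg h0 h0) h0)]

lemma gauss_sum (L : ℕ) :
    ∑ l ∈ Finset.range (L+1), ((L - l : ℕ):ℝ) = L*(L+1)/2 := by
  have h1 : ∑ l ∈ Finset.range (L+1), ((L - l : ℕ):ℝ) = ∑ l ∈ Finset.range (L+1), (l:ℝ) := by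
    have := Finset.sum_range_reflect (fun j => (j:ℝ)) (L+1)
    simpa using this
  rw [h1]
  have h2 := Finset.sum_range_id_mul_two (L+1)
  have h3 := congrArg (Nat.cast : ℕ → ℝ) h2
  push_cast at h3
  have : ∑ l ∈ Finset.range (L+1), (l:ℝ) = ((∑ l ∈ Finset.range (L+1), l : ℕ) : ℝ) := by push_cast; rfl
  rw [this]; push_cast; linarith

set_option maxHeartbeats 2000000 in
lemma F_bounds (L : ℕ) {θ : ℝ} (h0 : 0 < θ) (h1 : θ ≤ 1/(2*((L:ℝ)+1))) :
    1 - (L:ℝ)/(2*Real.pi)*θ - θ^2 ≤ F L θ ∧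
    F L θ ≤ 1 - (L:ℝ)/(2*Real.pi)*θ + 2*(L:ℝ)^2*θ^2 := by
  have hpi := Real.pi_pos
  have hpi3 := Real.pi_gt_three
  have hL1 : (1:ℝ) ≤ (L:ℝ)+1 := by
    have := Nat.cast_nonneg (α := ℝ) L; linarith
  have hhalf : θ ≤ 1/2 := by
    have : 1/(2*((L:ℝ)+1)) ≤ 1/2 := by
      apply one_div_le_one_div_of_le <;> nlinarith
    linarith
  have hLθ : (L:ℝ)*θ ≤ 1/2 := by
    have h2 : (L:ℝ)*θ ≤ (L:ℝ)*(1/(2*((L:ℝ)+1))) := by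
      apply mul_le_mul_of_nonneg_left h1 (Nat.cast_nonneg L)
    have h3 : (L:ℝ)*(1/(2*((L:ℝ)+1))) ≤ 1/2 := by
      rw [mul_one_div, div_le_div_iff₀ (by positivity) (by norm_num : (0:ℝ) < 2)]
      nlinarith
    linarith
  have hfac_nonneg : ∀ l' : ℕ, (0:ℝ) ≤ 1 - g^[l'] θ / Real.pi := by
    intro l'
    have h2 := (iter_bounds h0 hhalf l').2
    have h3 : g^[l'] θ / Real.pi ≤ θ / Real.pi := by
      exact (div_le_div_iff_of_pos_right hpi).mpr h2
    have : θ / Real.pi ≤ 1 := by rw [div_le_one hpi]; linarith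
    linarith
  -- lower bound per term
  have hterm_lo : ∀ l ∈ Finset.range (L+1),
      1 - θ^2/2 - ((L - l : ℕ):ℝ)*(θ/Real.pi) ≤
        Real.cos (g^[l] θ) * ∏ l' ∈ Finset.Ico l L, (1 - g^[l'] θ / Real.pi) := by
    intro l hl
    have hlL : l ≤ L := Nat.lt_succ_iff.mp (Finset.mem_range.mp hl)
    have hg2 := (iter_bounds h0 hhalf l).2
    have hg1 := (iter_bounds h0 hhalf l).1
    have hg0 : 0 < g^[l] θ :=
      lt_of_lt_of_le (mul_pos h0 (pow_pos (by linarith) l)) hg1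
    have hcos : 1 - θ^2/2 ≤ Real.cos (g^[l] θ) := by
      have h4 := Real.one_sub_sq_div_two_le_cos (x := g^[l] θ)
      nlinarith
    have hcos0 : 0 ≤ Real.cos (g^[l] θ) := by nlinarith
    have hcos1 : (0:ℝ) ≤ 1 - θ^2/2 := by nlinarith
    have hk : ((L - l : ℕ):ℝ) ≤ (L:ℝ) := by
      exact_mod_cast Nat.cast_le.mpr (Nat.sub_le L l)
    have hk0 : (0:ℝ) ≤ ((L - l : ℕ):ℝ) := Nat.cast_nonneg _
    have hqθ : θ/Real.pi ≤ θ := div_le_self h0.le (by linarith)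
    have hq0 : 0 ≤ θ/Real.pi := by positivity
    have hfacpos : (0:ℝ) ≤ 1 - ((L - l : ℕ):ℝ)*(θ/Real.pi) := by
      have : ((L - l : ℕ):ℝ)*(θ/Real.pi) ≤ (L:ℝ)*θ := by
        apply mul_le_mul hk hqθ hq0 (Nat.cast_nonneg _)
      linarith
    have hprod1 : (1 - θ/Real.pi)^(L - l) ≤ ∏ l' ∈ Finset.Ico l L, (1 - g^[l'] θ / Real.pi) := by
      have hconst : (1 - θ/Real.pi)^(L - l) = ∏ _l' ∈ Finset.Ico l L, (1 - θ/Real.pi) := by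
        rw [Finset.prod_const, Nat.card_Ico]
      rw [hconst]
      apply Finset.prod_le_prod
      · intro i _; have : θ/Real.pi ≤ 1 := by rw [div_le_one hpi]; linarith
        linarith
      · intro i _
        have h5 := (iter_bounds h0 hhalf i).2
        have : g^[i] θ / Real.pi ≤ θ / Real.pi := (div_le_div_iff_of_pos_right hpi).mpr h5
        linarith
    have hbern : 1 - ((L - l : ℕ):ℝ)*(θ/Real.pi) ≤ (1 - θ/Real.pi)^(L - l) := by
      have h6 := one_add_mul_le_pow (a := -(θ/Real.pi)) (by nlinarith) (L - l)
      rw [show (1 + -(θ/Real.pi)) = 1 - θ/Real.pi by ring] at h6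
      nlinarith
    calc 1 - θ^2/2 - ((L - l : ℕ):ℝ)*(θ/Real.pi)
        ≤ (1 - θ^2/2) * (1 - ((L - l : ℕ):ℝ)*(θ/Real.pi)) := by nlinarith [mul_nonneg (by nlinarith : (0:ℝ) ≤ θ^2/2) (mul_nonneg hk0 hq0)]
      _ ≤ Real.cos (g^[l] θ) * ∏ l' ∈ Finset.Ico l L, (1 - g^[l'] θ / Real.pi) :=
          mul_le_mul hcos (le_trans hbern hprod1) hfacpos hcos0
  -- lower bound on the sum
  have hsum_lo : ((L:ℝ)+1)*(1-θ^2/2) - (θ/Real.pi)*((L:ℝ)*((L:ℝ)+1)/2) ≤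
      ∑ l ∈ Finset.range (L+1),
        Real.cos (g^[l] θ) * ∏ l' ∈ Finset.Ico l L, (1 - g^[l'] θ / Real.pi) := by
    have h7 := Finset.sum_le_sum hterm_lo
    have h8 : ∑ l ∈ Finset.range (L+1), (1 - θ^2/2 - ((L - l : ℕ):ℝ)*(θ/Real.pi))
        = ((L:ℝ)+1)*(1-θ^2/2) - (θ/Real.pi)*((L:ℝ)*((L:ℝ)+1)/2) := by
      rw [Finset.sum_sub_distrib, Finset.sum_const, Finset.card_range]
      rw [← Finset.sum_mul, gauss_sum]
      push_cast; ring
    linarith [h8 ▸ h7]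
  -- upper bound
  set v : ℝ := θ*(1-θ)^L/Real.pi with hv
  have hone : (0:ℝ) ≤ 1 - θ := by linarith
  have hpowle : (1-θ)^L ≤ 1 := pow_le_one₀ hone (by linarith)
  have hv0 : 0 ≤ v := by positivity
  have hvq : v ≤ θ/Real.pi := by
    rw [hv, div_le_div_iff_of_pos_right hpi]
    nlinarith [pow_nonneg hone L]
  have hqθ : θ/Real.pi ≤ θ := div_le_self h0.le (by linarith)
  have hv1 : v ≤ 1 := by linarith
  have hterm_hi : ∀ l ∈ Finset.range (L+1),
      Real.cos (g^[l] θ) * ∏ l' ∈ Finset.Ico l L, (1 - g^[l'] θ / Real.pi)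
        ≤ 1 - ((L - l : ℕ):ℝ)*v + (L:ℝ)^2*v^2/2 := by
    intro l hl
    have hprodn : (0:ℝ) ≤ ∏ l' ∈ Finset.Ico l L, (1 - g^[l'] θ / Real.pi) :=
      Finset.prod_nonneg (fun i _ => hfac_nonneg i)
    have hprod2 : ∏ l' ∈ Finset.Ico l L, (1 - g^[l'] θ / Real.pi) ≤ (1-v)^(L-l) := by
      have hconst : (1 - v)^(L - l) = ∏ _l' ∈ Finset.Ico l L, (1 - v) := by
        rw [Finset.prod_const, Nat.card_Ico]
      rw [hconst]
      apply Finset.prod_le_prod (fun i _ => hfac_nonneg i)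
      intro i hi
      have hiL : i ≤ L := le_of_lt (Finset.mem_Ico.mp hi).2
      have h9 : (1-θ)^L ≤ (1-θ)^i := pow_le_pow_of_le_one hone (by linarith) hiL
      have h10 : θ*(1-θ)^L ≤ g^[i] θ := by
        have := (iter_bounds h0 hhalf i).1
        nlinarith
      have : v ≤ g^[i] θ / Real.pi := by
        rw [hv, div_le_div_iff_of_pos_right hpi]; exact h10
      linarith
    have hq1 : (1 - v)^(L-l) ≤ 1 - ((L-l:ℕ):ℝ)*v + ((L-l:ℕ):ℝ)^2*v^2/2 := pow_le_quad hv0 hv1 _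
    have hk : ((L - l : ℕ):ℝ) ≤ (L:ℝ) := by
      exact_mod_cast Nat.cast_le.mpr (Nat.sub_le L l)
    have hk0 : (0:ℝ) ≤ ((L - l : ℕ):ℝ) := Nat.cast_nonneg _
    have hsq : ((L-l:ℕ):ℝ)^2*v^2 ≤ (L:ℝ)^2*v^2 := by
      have hkk : ((L-l:ℕ):ℝ)^2 ≤ (L:ℝ)^2 := by nlinarith
      exact mul_le_mul_of_nonneg_right hkk (sq_nonneg v)
    have hcosle : Real.cos (g^[l] θ) * ∏ l' ∈ Finset.Ico l L, (1 - g^[l'] θ / Real.pi)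
        ≤ ∏ l' ∈ Finset.Ico l L, (1 - g^[l'] θ / Real.pi) := by
      nlinarith [Real.cos_le_one (g^[l] θ), hprodn]
    linarith
  have hsum_hi : ∑ l ∈ Finset.range (L+1),
        Real.cos (g^[l] θ) * ∏ l' ∈ Finset.Ico l L, (1 - g^[l'] θ / Real.pi)
      ≤ ((L:ℝ)+1)*(1 + (L:ℝ)^2*v^2/2) - v*((L:ℝ)*((L:ℝ)+1)/2) := by
    have h7 := Finset.sum_le_sum hterm_hi
    have h8 : ∑ l ∈ Finset.range (L+1), (1 - ((L - l : ℕ):ℝ)*v + (L:ℝ)^2*v^2/2)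
        = ((L:ℝ)+1)*(1 + (L:ℝ)^2*v^2/2) - v*((L:ℝ)*((L:ℝ)+1)/2) := by
      rw [Finset.sum_add_distrib, Finset.sum_sub_distrib, Finset.sum_const, Finset.sum_const,
        Finset.card_range, ← Finset.sum_mul, gauss_sum]
      push_cast; ring
    linarith [h8 ▸ h7]
  -- conclude
  have hLpos : (0:ℝ) < 1/((L:ℝ)+1) := by positivity
  constructor
  · have h11 := mul_le_mul_of_nonneg_left hsum_lo hLpos.le
    have h12 : (1/((L:ℝ)+1))*(((L:ℝ)+1)*(1-θ^2/2) - (θ/Real.pi)*((L:ℝ)*((L:ℝ)+1)/2))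
        = 1 - θ^2/2 - (L:ℝ)/(2*Real.pi)*θ := by
      field_simp
    rw [F]
    nlinarith [h11, h12.symm ▸ h11]
  · have h11 := mul_le_mul_of_nonneg_left hsum_hi hLpos.le
    have h12 : (1/((L:ℝ)+1))*(((L:ℝ)+1)*(1 + (L:ℝ)^2*v^2/2) - v*((L:ℝ)*((L:ℝ)+1)/2))
        = 1 + (L:ℝ)^2*v^2/2 - (L:ℝ)*v/2 := by
      field_simp
    rw [h12] at h11
    rw [F]
    -- now: (1/(L+1))*S ≤ 1 + L²v²/2 − Lv/2 ≤ 1 − L/(2π)θ + 2L²θ²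
    have hL0 : (0:ℝ) ≤ (L:ℝ) := Nat.cast_nonneg _
    set q : ℝ := θ/Real.pi with hqdef
    have hq0 : 0 ≤ q := by positivity
    have hbernL : 1 - (L:ℝ)*θ ≤ (1-θ)^L := by
      have h6 := one_add_mul_le_pow (a := -θ) (by linarith) L
      rw [show (1 + -θ) = 1 - θ by ring] at h6
      nlinarith
    have hv_lb : q - (L:ℝ)*θ*q ≤ v := by
      have h13 : q*(1 - (L:ℝ)*θ) ≤ q*(1-θ)^L := mul_le_mul_of_nonneg_left hbernL hq0
      have h14 : q*(1-θ)^L = v := by rw [hv, hqdef]; ring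
      nlinarith
    have t1 : (L:ℝ)*(q - v) ≤ (L:ℝ)*((L:ℝ)*θ*q) :=
      mul_le_mul_of_nonneg_left (by linarith) hL0
    have t2 : (L:ℝ)*((L:ℝ)*θ*q) ≤ (L:ℝ)^2*θ*θ := by nlinarith [mul_nonneg (mul_nonneg hL0 hL0) h0.le]
    have t3 : v*v ≤ q*q := mul_le_mul hvq hvq hv0 hq0
    have t4 : q*q ≤ θ*θ := mul_le_mul hqθ hqθ hq0 h0.le
    have t5 : (L:ℝ)^2*(v*v) ≤ (L:ℝ)^2*(θ*θ) :=
      mul_le_mul_of_nonneg_left (by linarith) (sq_nonneg _)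
    have hfinal : 1 + (L:ℝ)^2*v^2/2 - (L:ℝ)*v/2 ≤ 1 - (L:ℝ)/(2*Real.pi)*θ + 2*(L:ℝ)^2*θ^2 := by
      have hq_eq : (L:ℝ)/(2*Real.pi)*θ = (L:ℝ)*q/2 := by rw [hqdef]; ring
      rw [hq_eq]
      nlinarith [t1, t2, t5]
    linarith


lemma spec2 (a b c : ℝ) :
    spectrum ℝ !![a,c;c,b] =
      {(a+b - Real.sqrt ((a-b)^2+4*c^2))/2, (a+b + Real.sqrt ((a-b)^2+4*c^2))/2} := by
  have hD : Real.sqrt ((a-b)^2+4*c^2) ^ 2 = (a-b)^2+4*c^2 :=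
    Real.sq_sqrt (by positivity)
  ext x
  rw [spectrum.mem_iff]
  rw [Matrix.isUnit_iff_isUnit_det]
  rw [isUnit_iff_ne_zero, not_not]
  have hdet : ((algebraMap ℝ (Matrix (Fin 2) (Fin 2) ℝ)) x - !![a,c;c,b]).det
      = (x - a)*(x - b) - c^2 := by
    rw [Matrix.algebraMap_eq_diagonal]
    rw [Matrix.det_fin_two]
    simp [Matrix.diagonal]
    ring
  rw [hdet]
  simp only [Set.mem_insert_iff, Set.mem_singleton_iff]
  constructor
  · intro h
    have hfact : (x - (a+b - Real.sqrt ((a-b)^2+4*c^2))/2) *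
        (x - (a+b + Real.sqrt ((a-b)^2+4*c^2))/2) = 0 := by nlinarith [hD]
    rcases mul_eq_zero.mp hfact with h' | h'
    · left; linarith
    · right; linarith
  · intro h
    rcases h with h' | h' <;> (rw [h']; nlinarith [hD])

lemma sSup_spec (a b c : ℝ) :
    sSup (spectrum ℝ !![a,c;c,b]) = (a+b + Real.sqrt ((a-b)^2+4*c^2))/2 := by
  rw [spec2, csSup_pair]
  apply max_eq_right
  have := Real.sqrt_nonneg ((a-b)^2+4*c^2); linarith

lemma sInf_spec (a b c : ℝ) :
    sInf (spectrum ℝ !![a,c;c,b]) = (a+b - Real.sqrt ((a-b)^2+4*c^2))/2 := by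
  rw [spec2, csInf_pair]
  apply min_eq_left
  have := Real.sqrt_nonneg ((a-b)^2+4*c^2); linarith

lemma posdef2 {a b c : ℝ} (ha : 0 < a) (hb : 0 < b) (hdet : c^2 < a*b) :
    (!![a,c;c,b] : Matrix (Fin 2) (Fin 2) ℝ).PosDef := by
  constructor
  · ext i j
    fin_cases i <;> fin_cases j <;> simp [Matrix.conjTranspose_apply]
  · intro x hx
    have hx' : x 0 ≠ 0 ∨ x 1 ≠ 0 := by
      by_contra hcon
      push_neg at hcon
      exact hx (by ext i; fin_cases i <;> simp [hcon.1, hcon.2])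
    have hval : (x.sum fun i xi ↦ x.sum fun j xj ↦ star xi * (!![a,c;c,b] : Matrix (Fin 2) (Fin 2) ℝ) i j * xj)
        = x 0 * (a * x 0 + c * x 1) + x 1 * (c * x 0 + b * x 1) := by
      simp [Finsupp.sum_fintype, Fin.sum_univ_two]
      ring
    rw [hval]
    rcases eq_or_ne (x 1) 0 with h1 | h1
    · have h0 : x 0 ≠ 0 := by
        rcases hx' with h | h
        · exact h
        · exact absurd h1 h
      rw [h1]
      have : x 0 * (a * x 0) > 0 := by nlinarith [sq_nonneg (x 0), (mul_self_pos).mpr h0]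
      nlinarith
    · nlinarith [sq_nonneg (a * x 0 + c * x 1), mul_pos (sub_pos.mpr hdet) ((mul_self_pos).mpr h1)]

lemma kappa_mono {a b c₁ c₂ : ℝ} (ha : 0 < a) (hb : 0 < b) (h1 : 0 ≤ c₁) (h2 : c₁ < c₂)
    (h3 : c₂^2 < a*b) :
    (a+b + Real.sqrt ((a-b)^2+4*c₁^2))/2 / ((a+b - Real.sqrt ((a-b)^2+4*c₁^2))/2)
      < (a+b + Real.sqrt ((a-b)^2+4*c₂^2))/2 / ((a+b - Real.sqrt ((a-b)^2+4*c₂^2))/2) := by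
  set s₁ := Real.sqrt ((a-b)^2+4*c₁^2) with hs₁
  set s₂ := Real.sqrt ((a-b)^2+4*c₂^2) with hs₂
  have hs₁0 : 0 ≤ s₁ := Real.sqrt_nonneg _
  have hs12 : s₁ < s₂ := by
    apply Real.sqrt_lt_sqrt (by positivity)
    nlinarith
  have hs₂lt : s₂ < a+b := by
    have h4 : s₂ < Real.sqrt ((a+b)^2) := by
      apply Real.sqrt_lt_sqrt (by positivity)
      nlinarith
    rwa [Real.sqrt_sq (by linarith)] at h4
  rw [div_lt_div_iff₀ (by linarith) (by linarith)]
  nlinarith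


lemma F_facts (L : ℕ) (hL : 1 ≤ L) {θ : ℝ} (h0 : 0 < θ)
    (h1 : θ ≤ 1/(2*((L:ℝ)+1))) (h2 : θ < 1/(7*(2*(L:ℝ)^2+1))) :
    0 < F L θ ∧ F L θ < Real.cos θ := by
  have hpi := Real.pi_pos
  have hpi3 := Real.pi_gt_three
  have hpi4 : Real.pi < 3.15 := Real.pi_lt_d2
  have hL1 : (1:ℝ) ≤ (L:ℝ) := by exact_mod_cast hL
  have hhalf : θ ≤ 1/2 := by
    have h3 : 1/(2*((L:ℝ)+1)) ≤ 1/2 := by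
      apply one_div_le_one_div_of_le <;> nlinarith
    linarith
  have hLθ : (L:ℝ)*θ ≤ 1/2 := by
    have h3 : (2*((L:ℝ)+1))*θ ≤ 1 := by
      rw [← le_div_iff₀' (by nlinarith)]; exact h1
    nlinarith
  obtain ⟨hlo, hhi⟩ := F_bounds L h0 h1
  have hBge : (L:ℝ)*θ/7 ≤ (L:ℝ)/(2*Real.pi)*θ := by
    rw [show (L:ℝ)/(2*Real.pi)*θ = ((L:ℝ)*θ)/(2*Real.pi) by ring]
    gcongr <;> nlinarith
  have hBle : (L:ℝ)/(2*Real.pi)*θ ≤ (L:ℝ)*θ/6 := by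
    rw [show (L:ℝ)/(2*Real.pi)*θ = ((L:ℝ)*θ)/(2*Real.pi) by ring]
    gcongr <;> nlinarith
  have hsq : θ^2 ≤ 1/4 := by nlinarith
  have h2' : (7*(2*(L:ℝ)^2+1))*θ < 1 := by
    rw [← lt_div_iff₀' (by positivity)]; exact h2
  have h2sq : 7*(2*(L:ℝ)^2+1)*θ^2 < θ := by nlinarith
  constructor
  · nlinarith
  · have hcos := Real.one_sub_sq_div_two_lt_cos (x := θ) (ne_of_gt h0)
    nlinarith

lemma F_lt_F {L₁ L₂ : ℕ} (hL₂ : 1 ≤ L₂) (hL : L₂ < L₁) {θ : ℝ} (h0 : 0 < θ)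
    (h1 : θ ≤ 1/(2*((L₁:ℝ)+1))) (h2 : θ < 1/(7*(2*(L₁:ℝ)^2+1))) :
    F L₁ θ < F L₂ θ := by
  have hpi := Real.pi_pos
  have hpi3 := Real.pi_gt_three
  have hpi4 : Real.pi < 3.15 := Real.pi_lt_d2
  have hcast : (L₂:ℝ) + 1 ≤ (L₁:ℝ) := by exact_mod_cast Nat.succ_le_of_lt hL
  have hL₂0 : (0:ℝ) ≤ (L₂:ℝ) := Nat.cast_nonneg _
  have h1' : θ ≤ 1/(2*((L₂:ℝ)+1)) := by
    refine le_trans h1 ?_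
    apply one_div_le_one_div_of_le <;> nlinarith
  obtain ⟨hlo₂, _⟩ := F_bounds L₂ h0 h1'
  obtain ⟨_, hhi₁⟩ := F_bounds L₁ h0 h1
  have hdiff : ((L₁:ℝ) - L₂)*θ/7 ≤ (L₁:ℝ)/(2*Real.pi)*θ - (L₂:ℝ)/(2*Real.pi)*θ := by
    rw [show (L₁:ℝ)/(2*Real.pi)*θ - (L₂:ℝ)/(2*Real.pi)*θ
      = (((L₁:ℝ) - L₂)*θ)/(2*Real.pi) by ring]
    gcongr <;> nlinarith
  have h2' : (7*(2*(L₁:ℝ)^2+1))*θ < 1 := by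
    rw [← lt_div_iff₀' (by positivity)]; exact h2
  have h2sq : 7*(2*(L₁:ℝ)^2+1)*θ^2 < θ := by nlinarith
  nlinarith

set_option maxHeartbeats 2000000 in
/-- Theorem 5.2 of the paper. For a two-point dataset `{x₁, x₂}` of
nonzero vectors with `a = ‖x₁‖²`, `b = ‖x₂‖²`, let `G θ` be the 2×2 Gram matrix (with
off-diagonal `√(ab)·cos θ`) and `K L θ` the normalized infinite-width NTK matrix of the
depth-`L` ReLU network (with off-diagonal `√(ab)·F L θ`). Then for all `L₁ > L₂ ≥ 1`
there is `δ > 0` such that for every input angle `θ ∈ (0, δ)` the three matrices are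
positive definite with condition numbers (ratios `λ_max/λ_min = sSup/sInf` of the
spectrum) satisfying `κ(K L₁ θ) < κ(K L₂ θ) < κ(G θ)`; moreover, for each `L ≥ 1` there
is `δ > 0` such that for `θ ∈ (0, δ)` the eigenvalues interlace as
`λ_max(G θ) > λ_max(K L θ) ≥ λ_min(K L θ) > λ_min(G θ)`. -/
theorem deep_relu_ntk_better_conditioning
    {d : ℕ} (hd : 0 < d)
    (x₁ x₂ : EuclideanSpace ℝ (Fin d)) (hx₁ : x₁ ≠ 0) (hx₂ : x₂ ≠ 0)
    (a b : ℝ) (ha : a = ‖x₁‖ ^ 2) (hb : b = ‖x₂‖ ^ 2)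
    (G : ℝ → Matrix (Fin 2) (Fin 2) ℝ) (K : ℕ → ℝ → Matrix (Fin 2) (Fin 2) ℝ)
    (hG : ∀ θ, G θ = !![a, Real.sqrt (a * b) * Real.cos θ;
                        Real.sqrt (a * b) * Real.cos θ, b])
    (hK : ∀ L θ, K L θ = !![a, Real.sqrt (a * b) * F L θ;
                            Real.sqrt (a * b) * F L θ, b]) :
    (∀ L₁ L₂ : ℕ, 1 ≤ L₂ → L₂ < L₁ →
      ∃ δ > 0, ∀ θ ∈ Set.Ioo (0 : ℝ) δ,
        (G θ).PosDef ∧ (K L₂ θ).PosDef ∧ (K L₁ θ).PosDef ∧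
        sSup (spectrum ℝ (K L₁ θ)) / sInf (spectrum ℝ (K L₁ θ)) <
          sSup (spectrum ℝ (K L₂ θ)) / sInf (spectrum ℝ (K L₂ θ)) ∧
        sSup (spectrum ℝ (K L₂ θ)) / sInf (spectrum ℝ (K L₂ θ)) <
          sSup (spectrum ℝ (G θ)) / sInf (spectrum ℝ (G θ))) ∧
    (∀ L : ℕ, 1 ≤ L →
      ∃ δ > 0, ∀ θ ∈ Set.Ioo (0 : ℝ) δ,
        sSup (spectrum ℝ (K L θ)) < sSup (spectrum ℝ (G θ)) ∧
        sInf (spectrum ℝ (K L θ)) ≤ sSup (spectrum ℝ (K L θ)) ∧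
        sInf (spectrum ℝ (G θ)) < sInf (spectrum ℝ (K L θ))) := by
  have hpi := Real.pi_pos
  have hpi3 := Real.pi_gt_three
  have ha' : 0 < a := by rw [ha]; exact pow_pos (norm_pos_iff.mpr hx₁) 2
  have hb' : 0 < b := by rw [hb]; exact pow_pos (norm_pos_iff.mpr hx₂) 2
  have hab : 0 < a*b := mul_pos ha' hb'
  have hr : 0 < Real.sqrt (a*b) := Real.sqrt_pos.mpr hab
  have hrsq : Real.sqrt (a*b)^2 = a*b := Real.sq_sqrt hab.le
  constructor
  · intro L₁ L₂ hL₂ hLlt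
    refine ⟨min (1/(2*((L₁:ℝ)+1))) (1/(7*(2*(L₁:ℝ)^2+1))), by positivity, ?_⟩
    rintro θ ⟨h0, hδ⟩
    have h1 : θ ≤ 1/(2*((L₁:ℝ)+1)) := le_of_lt (lt_of_lt_of_le hδ (min_le_left _ _))
    have h2 : θ < 1/(7*(2*(L₁:ℝ)^2+1)) := lt_of_lt_of_le hδ (min_le_right _ _)
    have hL₁ : 1 ≤ L₁ := le_trans hL₂ (le_of_lt hLlt)
    have hcastL : (L₂:ℝ) + 1 ≤ (L₁:ℝ) := by exact_mod_cast Nat.succ_le_of_lt hLlt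
    have hcast2 : (0:ℝ) ≤ (L₂:ℝ) := Nat.cast_nonneg _
    have h1' : θ ≤ 1/(2*((L₂:ℝ)+1)) :=
      le_trans h1 (by apply one_div_le_one_div_of_le <;> nlinarith)
    have h2' : θ < 1/(7*(2*(L₂:ℝ)^2+1)) :=
      lt_of_lt_of_le h2 (by apply one_div_le_one_div_of_le <;> nlinarith)
    obtain ⟨hF₁pos, hF₁cos⟩ := F_facts L₁ hL₁ h0 h1 h2
    obtain ⟨hF₂pos, hF₂cos⟩ := F_facts L₂ hL₂ h0 h1' h2'
    have hFF := F_lt_F hL₂ hLlt h0 h1 h2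
    have hhalf : θ ≤ 1/2 := by
      have hc1 : (0:ℝ) ≤ (L₁:ℝ) := Nat.cast_nonneg _
      have : 1/(2*((L₁:ℝ)+1)) ≤ 1/2 := by
        apply one_div_le_one_div_of_le <;> nlinarith
      linarith
    have hcos1 : Real.cos θ < 1 := by
      have hq : (0:ℝ) < 2/Real.pi^2*θ^2 := by positivity
      nlinarith [Real.cos_le_one_sub_mul_cos_sq (x := θ) (by rw [abs_of_pos h0]; linarith)]
    have hcos0 : 0 < Real.cos θ :=
      Real.cos_pos_of_mem_Ioo ⟨by linarith, by linarith⟩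
    have hGd : (Real.sqrt (a*b) * Real.cos θ)^2 < a*b := by
      rw [mul_pow, hrsq]
      have hc2 : Real.cos θ^2 < 1 := by nlinarith
      nlinarith [mul_lt_mul_of_pos_left hc2 hab]
    have hK₁d : (Real.sqrt (a*b) * F L₁ θ)^2 < a*b := by
      rw [mul_pow, hrsq]
      have hc2 : F L₁ θ^2 < 1 := by nlinarith
      nlinarith [mul_lt_mul_of_pos_left hc2 hab]
    have hK₂d : (Real.sqrt (a*b) * F L₂ θ)^2 < a*b := by
      rw [mul_pow, hrsq]
      have hc2 : F L₂ θ^2 < 1 := by nlinarith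
      nlinarith [mul_lt_mul_of_pos_left hc2 hab]
    refine ⟨?_, ?_, ?_, ?_, ?_⟩
    · rw [hG]; exact posdef2 ha' hb' hGd
    · rw [hK]; exact posdef2 ha' hb' hK₂d
    · rw [hK]; exact posdef2 ha' hb' hK₁d
    · simp only [hK, sSup_spec, sInf_spec]
      exact kappa_mono ha' hb' (mul_nonneg hr.le hF₁pos.le)
        (mul_lt_mul_of_pos_left hFF hr) hK₂d
    · simp only [hK, hG, sSup_spec, sInf_spec]
      exact kappa_mono ha' hb' (mul_nonneg hr.le hF₂pos.le)
        (mul_lt_mul_of_pos_left hF₂cos hr) hGd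
  · intro L hL
    refine ⟨min (1/(2*((L:ℝ)+1))) (1/(7*(2*(L:ℝ)^2+1))), by positivity, ?_⟩
    rintro θ ⟨h0, hδ⟩
    have h1 : θ ≤ 1/(2*((L:ℝ)+1)) := le_of_lt (lt_of_lt_of_le hδ (min_le_left _ _))
    have h2 : θ < 1/(7*(2*(L:ℝ)^2+1)) := lt_of_lt_of_le hδ (min_le_right _ _)
    obtain ⟨hFpos, hFcos⟩ := F_facts L hL h0 h1 h2
    simp only [hK, hG, sSup_spec, sInf_spec]
    have hlt : (a-b)^2 + 4*(Real.sqrt (a*b)*F L θ)^2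
        < (a-b)^2 + 4*(Real.sqrt (a*b)*Real.cos θ)^2 := by
      rw [mul_pow, mul_pow, hrsq]
      have hc2 : F L θ^2 < Real.cos θ^2 := by nlinarith
      nlinarith [mul_lt_mul_of_pos_left hc2 hab]
    have hs := Real.sqrt_lt_sqrt (by positivity) hlt
    have hs0 := Real.sqrt_nonneg ((a-b)^2 + 4*(Real.sqrt (a*b)*F L θ)^2)
    exact ⟨by linarith, by linarith, by linarith⟩
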